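/- Let N be a weakly classical 1-absorbing prime submodule of M, let a, b, c ∈ R be nonunits, and let K be a submodule of M with abcK ⊆ N. If (a, b, c, k) is not a classical 1-quadruple-zero of N for every k ∈ K, then abK ⊆ N or cK ⊆ N. -/
import Mathlib


/-- A proper submodule `N` of `M` is weakly classical 1-absorbing prime if whenever
`abcm ∈ N` and `abcm ≠ 0` for nonunits `a, b, c ∈ R` and `m ∈ M`, then `abm ∈ N` or `cm ∈ N`. -/
def IsWeaklyClassical1AbsorbingPrime {R : Type*} [CommRing R] {M : Type*} [AddCommGroup M]
    [Module R M] (N : Submodule R M) : Prop :=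
  N ≠ ⊤ ∧ ∀ a b c : R, ∀ m : M, ¬ IsUnit a → ¬ IsUnit b → ¬ IsUnit c →
    (a * b * c) • m ∈ N → (a * b * c) • m ≠ 0 → ((a * b) • m ∈ N ∨ c • m ∈ N)

/-- A proper ideal `I` of `R` is weakly 1-absorbing prime if whenever `abc ∈ I` and
`abc ≠ 0` for nonunits `a, b, c ∈ R`, then `ab ∈ I` or `c ∈ I`. -/
def IsWeakly1AbsorbingPrimeIdeal {R : Type*} [CommRing R] (I : Ideal R) : Prop :=
  I ≠ ⊤ ∧ ∀ a b c : R, ¬ IsUnit a → ¬ IsUnit b → ¬ IsUnit c →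
    a * b * c ∈ I → a * b * c ≠ 0 → (a * b ∈ I ∨ c ∈ I)

/-- For nonunits `a, b, c ∈ R` and `m ∈ M`, the tuple `(a, b, c, m)` is a classical
1-quadruple-zero of `N` if `abcm = 0`, `abm ∉ N` and `cm ∉ N`. -/
def IsClassical1QuadrupleZero {R : Type*} [CommRing R] {M : Type*} [AddCommGroup M]
    [Module R M] (N : Submodule R M) (a b c : R) (m : M) : Prop :=
  ¬ IsUnit a ∧ ¬ IsUnit b ∧ ¬ IsUnit c ∧ (a * b * c) • m = 0 ∧
    (a * b) • m ∉ N ∧ c • m ∉ N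

/-- If `N` is weakly classical 1-absorbing prime, `a, b, c` are nonunits,
`K` is a submodule with `abcK ⊆ N`, and `(a, b, c, k)` is not a classical
1-quadruple-zero of `N` for every `k ∈ K`, then `abK ⊆ N` or `cK ⊆ N`. -/
theorem stmt_9 {R : Type*} [CommRing R] [Nontrivial R] {M : Type*} [AddCommGroup M]
    [Module R M] [Nontrivial M] (N : Submodule R M)
    (hN : IsWeaklyClassical1AbsorbingPrime N) (a b c : R)
    (ha : ¬ IsUnit a) (hb : ¬ IsUnit b) (hc : ¬ IsUnit c) (K : Submodule R M)
    (hsub : ∀ k ∈ K, (a * b * c) • k ∈ N)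
    (hfree : ∀ k ∈ K, ¬ IsClassical1QuadrupleZero N a b c k) :
    (∀ k ∈ K, (a * b) • k ∈ N) ∨ (∀ k ∈ K, c • k ∈ N) := by
  have key : ∀ k ∈ K, (a * b) • k ∈ N ∨ c • k ∈ N := by
    intro k hk
    by_cases h0 : (a * b * c) • k = 0
    · by_contra h
      push_neg at h
      exact hfree k hk ⟨ha, hb, hc, h0, h.1, h.2⟩
    · exact hN.2 a b c k ha hb hc (hsub k hk) h0
  by_contra h
  push_neg at h
  obtain ⟨⟨k1, hk1, hab1⟩, ⟨k2, hk2, hc2⟩⟩ := h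
  have hc1 : c • k1 ∈ N := (key k1 hk1).resolve_left hab1
  have hab2 : (a * b) • k2 ∈ N := (key k2 hk2).resolve_right hc2
  rcases key (k1 + k2) (K.add_mem hk1 hk2) with h | h
  · rw [smul_add] at h
    exact hab1 (by simpa using N.sub_mem h hab2)
  · rw [smul_add] at h
    exact hc2 (by simpa using N.sub_mem h hc1)
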